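/- The space Apx(X,Y) of approximate isometries from X to Y, equipped with the topology induced from the product topology on [0,∞]^{X×Y}, is compact. -/

import Mathlib

open scoped ENNReal

/-- A Katětov function on a metric space, with values in `[0,∞]`. -/
def Katetov {X : Type*} [MetricSpace X] (ψ : X → ℝ≥0∞) : Prop :=
  ∀ x y : X, ψ x ≤ ENNReal.ofReal (dist x y) + ψ y ∧
    ENNReal.ofReal (dist x y) ≤ ψ x + ψ y

/-- An approximate isometry `X ⇝ Y`: a bi-Katětov function `X × Y → [0,∞]`. -/
def BiKatetov {X Y : Type*} [MetricSpace X] [MetricSpace Y]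
    (ψ : X × Y → ℝ≥0∞) : Prop :=
  (∀ y, Katetov fun x => ψ (x, y)) ∧ (∀ x, Katetov fun y => ψ (x, y))

/-- The composition `φψ(x,z) = inf_y (ψ(x,y) + φ(y,z))` of approximate
isometries `ψ : X ⇝ Y` and `φ : Y ⇝ Z`. -/
noncomputable def ApxComp {X Y Z : Type*} [MetricSpace X] [MetricSpace Y]
    [MetricSpace Z] (ψ : X × Y → ℝ≥0∞) (φ : Y × Z → ℝ≥0∞) :
    X × Z → ℝ≥0∞ :=
  fun p => ⨅ y : Y, ψ (p.1, y) + φ (y, p.2)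

/-- The pseudo-inverse `ψ*(y,x) = ψ(x,y)`. -/
def ApxInv {X Y : Type*} (ψ : X × Y → ℝ≥0∞) : Y × X → ℝ≥0∞ :=
  fun p => ψ (p.2, p.1)

/-- The space `Apx(X,Y)` of approximate isometries, with the topology induced
from the product topology on `[0,∞]^{X×Y}`, is compact. -/
theorem isCompact_apx {X Y : Type*} [MetricSpace X] [MetricSpace Y] :
    IsCompact {ψ : X × Y → ℝ≥0∞ | BiKatetov ψ} := by
  have hclosed : IsClosed {ψ : X × Y → ℝ≥0∞ | BiKatetov ψ} := by
    have : {ψ : X × Y → ℝ≥0∞ | BiKatetov ψ} =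
        (⋂ y, ⋂ x, ⋂ x', ({ψ : X × Y → ℝ≥0∞ |
            ψ (x, y) ≤ ENNReal.ofReal (dist x x') + ψ (x', y)} ∩
          {ψ : X × Y → ℝ≥0∞ |
            ENNReal.ofReal (dist x x') ≤ ψ (x, y) + ψ (x', y)})) ∩
        (⋂ x, ⋂ y, ⋂ y', ({ψ : X × Y → ℝ≥0∞ |
            ψ (x, y) ≤ ENNReal.ofReal (dist y y') + ψ (x, y')} ∩
          {ψ : X × Y → ℝ≥0∞ |
            ENNReal.ofReal (dist y y') ≤ ψ (x, y) + ψ (x, y')})) := by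
      ext ψ
      simp only [BiKatetov, Katetov, Set.mem_setOf_eq, Set.mem_inter_iff,
        Set.mem_iInter]
    rw [this]
    apply IsClosed.inter
    · exact isClosed_iInter fun y => isClosed_iInter fun x =>
        isClosed_iInter fun x' => IsClosed.inter
          (isClosed_le (continuous_apply _)
            (by fun_prop))
          (isClosed_le continuous_const
            ((continuous_apply _).add (continuous_apply _)))
    · exact isClosed_iInter fun x => isClosed_iInter fun y =>
        isClosed_iInter fun y' => IsClosed.inter
          (isClosed_le (continuous_apply _)
            (by fun_prop))
          (isClosed_le continuous_const
            ((continuous_apply _).add (continuous_apply _)))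
  exact hclosed.isCompact
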